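/- For every n ≥ 2, the target group obtained by factoring the progenitor 2^{⋆n} : Sₙ (with Sₙ acting on the 1-element subsets of {1,…,n}) by the single relator (t_{1}·(1 2))³ is isomorphic to the symmetric group on n+1 letters, i.e. to the Coxeter group of type Aₙ. -/

import Mathlib

open Monoid Pointwise

/-- The type of `k`-element subsets of `Fin n`. -/
abbrev KSub (n k : ℕ) := {s : Finset (Fin n) // s.card = k}

/-- The free product of copies of `ℤ/2ℤ` indexed by the `k`-element subsets of `Fin n`. -/
abbrev FP (n k : ℕ) := Monoid.CoprodI (fun _ : KSub n k => Multiplicative (ZMod 2))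

/-- The symmetric generator `t_S`. -/
def tFP {n k : ℕ} (S : KSub n k) : FP n k :=
  Monoid.CoprodI.of (i := S) (Multiplicative.ofAdd (1 : ZMod 2))

/-- The action of a permutation of `Fin n` on the `k`-element subsets. -/
instance KSub.instMulAction (n k : ℕ) : MulAction (Equiv.Perm (Fin n)) (KSub n k) where
  smul σ S := ⟨σ • S.1, by rw [Finset.card_smul_finset]; exact S.2⟩
  one_smul S := Subtype.ext (one_smul _ S.1)
  mul_smul σ τ S := Subtype.ext (mul_smul σ τ S.1)

/-- The endomorphism of the free product induced by a permutation of `Fin n`. -/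
def fpHom {n k : ℕ} (σ : Equiv.Perm (Fin n)) : FP n k →* FP n k :=
  Monoid.CoprodI.lift (fun S => Monoid.CoprodI.of (M := fun _ : KSub n k => Multiplicative (ZMod 2)) (i := σ • S))

lemma fpHom_comp {n k : ℕ} (σ τ : Equiv.Perm (Fin n)) :
    (fpHom (n := n) (k := k) σ).comp (fpHom τ) = fpHom (σ * τ) := by
  apply Monoid.CoprodI.ext_hom
  intro S
  ext x
  simp [fpHom, Monoid.CoprodI.lift_of, mul_smul]

lemma fpHom_one {n k : ℕ} : fpHom (n := n) (k := k) 1 = MonoidHom.id _ := by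
  apply Monoid.CoprodI.ext_hom
  intro S
  ext x
  simp [fpHom, Monoid.CoprodI.lift_of]

/-- The action of `Sym(Fin n)` on the free product, permuting the free factors. -/
def fpAut (n k : ℕ) : Equiv.Perm (Fin n) →* MulAut (FP n k) :=
  MonoidHom.mk' (fun σ =>
    { toFun := fpHom σ
      invFun := fpHom σ⁻¹
      left_inv := fun x => by
        have h := fpHom_comp (n := n) (k := k) σ⁻¹ σ
        rw [inv_mul_cancel, fpHom_one] at h
        exact DFunLike.congr_fun h x
      right_inv := fun x => by
        have h := fpHom_comp (n := n) (k := k) σ σ⁻¹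
        rw [mul_inv_cancel, fpHom_one] at h
        exact DFunLike.congr_fun h x
      map_mul' := map_mul _ })
    (fun σ τ => by
      ext x
      exact (DFunLike.congr_fun (fpHom_comp (n := n) (k := k) σ τ) x).symm)

/-- The progenitor `2^{⋆C(n,k)} : Sₙ`. -/
abbrev Progenitor (n k : ℕ) := FP n k ⋊[fpAut n k] Equiv.Perm (Fin n)

/-- The target group: the quotient of the progenitor by the normal closure of the
single relator `(t_{S₀}·σ₀)³`. -/
abbrev TargetGroup (n k : ℕ) (S₀ : KSub n k) (σ₀ : Equiv.Perm (Fin n)) :=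
  Progenitor n k ⧸ Subgroup.normalClosure
    {(SemidirectProduct.inl (tFP S₀) * SemidirectProduct.inr σ₀) ^ 3}

/-- The image in the target group of the symmetric generator `t_S`. -/
def tbar {n k : ℕ} (S₀ : KSub n k) (σ₀ : Equiv.Perm (Fin n)) (S : KSub n k) :
    TargetGroup n k S₀ σ₀ :=
  QuotientGroup.mk (SemidirectProduct.inl (tFP S))

/-- The canonical map from the control group `Sₙ` to the target group. -/
def pbar {n k : ℕ} (S₀ : KSub n k) (σ₀ : Equiv.Perm (Fin n)) :
    Equiv.Perm (Fin n) →* TargetGroup n k S₀ σ₀ :=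
  (QuotientGroup.mk' _).comp (SemidirectProduct.inr)


-- basic helper lemmas test
lemma zmod2_cases (x : Multiplicative (ZMod 2)) :
    x = 1 ∨ x = Multiplicative.ofAdd 1 := by revert x; decide

def invHom {G : Type*} [Group G] (g : G) (hg : g * g = 1) : Multiplicative (ZMod 2) →* G where
  toFun x := g ^ (Multiplicative.toAdd x).val
  map_one' := by simp
  map_mul' x y := by
    have hg2 : g ^ 2 = 1 := by rw [pow_two, hg]
    have key : ∀ m : ℕ, g ^ m = g ^ (m % 2) := fun m => by
      conv_lhs => rw [← Nat.div_add_mod m 2, pow_add, pow_mul, hg2, one_pow, one_mul]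
    show g ^ (Multiplicative.toAdd (x * y)).val = _
    rw [toAdd_mul, ZMod.val_add, ← key, pow_add]

@[simp] lemma invHom_apply_one {G : Type*} [Group G] (g : G) (hg : g * g = 1) :
    invHom g hg (Multiplicative.ofAdd 1) = g := by
  show g ^ (1 : ZMod 2).val = g
  norm_num [ZMod.val_one]

lemma zmod2_hom_ext {G : Type*} [Monoid G] {f₁ f₂ : Multiplicative (ZMod 2) →* G}
    (h : f₁ (Multiplicative.ofAdd 1) = f₂ (Multiplicative.ofAdd 1)) : f₁ = f₂ := by
  refine MonoidHom.ext fun x => ?_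
  rcases zmod2_cases x with rfl | rfl
  · simp
  · exact h

lemma viaEmbedding_swap {α β : Type*} [DecidableEq α] [DecidableEq β] (f : α ↪ β) (a b : α) :
    (Equiv.swap a b).viaEmbedding f = Equiv.swap (f a) (f b) := by
  ext x
  by_cases hx : x ∈ Set.range f
  · obtain ⟨c, rfl⟩ := hx
    rw [Equiv.Perm.viaEmbedding_apply, f.injective.swap_apply]
  · rw [Equiv.Perm.viaEmbedding_apply_of_notMem _ _ _ hx,
      Equiv.swap_apply_of_ne_of_ne (fun h => hx ⟨a, h.symm⟩) (fun h => hx ⟨b, h.symm⟩)]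

lemma swap_swap_cube {α : Type*} [DecidableEq α] {a b c : α}
    (hab : a ≠ b) (hac : a ≠ c) (hbc : b ≠ c) :
    (Equiv.swap a c * Equiv.swap a b) ^ 3 = 1 := by
  have hpa : (Equiv.swap a c * Equiv.swap a b) a = b := by
    simp [Equiv.swap_apply_of_ne_of_ne hab.symm hbc]
  have hpb : (Equiv.swap a c * Equiv.swap a b) b = c := by
    simp [Equiv.swap_apply_of_ne_of_ne, hab]
  have hpc : (Equiv.swap a c * Equiv.swap a b) c = a := by
    simp [Equiv.swap_apply_of_ne_of_ne hac.symm hbc.symm]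
  set p := Equiv.swap a c * Equiv.swap a b with hp
  ext x
  have hexp : (p ^ 3) x = p (p (p x)) := by
    simp [pow_succ, Equiv.Perm.mul_apply]
  rw [hexp, Equiv.Perm.one_apply]
  rcases eq_or_ne x a with rfl | hxa
  · rw [hpa, hpb, hpc]
  rcases eq_or_ne x b with rfl | hxb
  · rw [hpb, hpc, hpa]
  rcases eq_or_ne x c with rfl | hxc
  · rw [hpc, hpa, hpb]
  · have hfix : p x = x := by
      rw [hp, Equiv.Perm.mul_apply, Equiv.swap_apply_of_ne_of_ne hxa hxb,
        Equiv.swap_apply_of_ne_of_ne hxa hxc]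
    rw [hfix, hfix, hfix]

section Structural

open Monoid SemidirectProduct

variable {n : ℕ}

/-- singleton subset -/
def sing (a : Fin n) : KSub n 1 := ⟨{a}, Finset.card_singleton _⟩

lemma ksub_eq_sing (S : KSub n 1) : ∃ a, S = sing a := by
  obtain ⟨a, ha⟩ := Finset.card_eq_one.mp S.2
  exact ⟨a, Subtype.ext ha⟩

/-- the unique element of a 1-element subset -/
def el (S : KSub n 1) : Fin n :=
  S.1.min' (Finset.card_pos.mp (by rw [S.2]; norm_num))

@[simp] lemma el_sing (a : Fin n) : el (sing a) = a := Finset.min'_singleton a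

lemma sing_el (S : KSub n 1) : sing (el S) = S := by
  obtain ⟨a, rfl⟩ := ksub_eq_sing S
  rw [el_sing]

lemma smul_sing (σ : Equiv.Perm (Fin n)) (a : Fin n) : σ • sing a = sing (σ a) := by
  apply Subtype.ext
  show σ • ({a} : Finset (Fin n)) = {σ a}
  rw [Finset.smul_finset_singleton]
  rfl

lemma el_smul (σ : Equiv.Perm (Fin n)) (S : KSub n 1) : el (σ • S) = σ (el S) := by
  obtain ⟨a, rfl⟩ := ksub_eq_sing S
  rw [smul_sing, el_sing, el_sing]

lemma fpAut_tFP {k : ℕ} (σ : Equiv.Perm (Fin n)) (S : KSub n k) :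
    fpAut n k σ (tFP S) = tFP (σ • S) := by
  show fpHom σ (tFP S) = tFP (σ • S)
  simp [fpHom, tFP, Monoid.CoprodI.lift_of]

variable {k : ℕ} (S₀ : KSub n k) (σ₀ : Equiv.Perm (Fin n))

lemma tFP_mul_self (S : KSub n k) : tFP S * tFP S = (1 : FP n k) := by
  rw [tFP, ← MonoidHom.map_mul]
  have h : Multiplicative.ofAdd (1 : ZMod 2) * Multiplicative.ofAdd (1 : ZMod 2) = 1 := by decide
  rw [h, MonoidHom.map_one]

lemma pbar_apply (π : Equiv.Perm (Fin n)) :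
    pbar S₀ σ₀ π = QuotientGroup.mk (SemidirectProduct.inr π) := rfl

lemma tbar_mul_self (S : KSub n k) : tbar S₀ σ₀ S * tbar S₀ σ₀ S = 1 := by
  show (QuotientGroup.mk (inl (tFP S)) : TargetGroup n k S₀ σ₀) * QuotientGroup.mk (inl (tFP S)) = 1
  rw [← QuotientGroup.mk_mul, ← map_mul, tFP_mul_self, map_one, QuotientGroup.mk_one]

lemma pbar_mul_tbar (π : Equiv.Perm (Fin n)) (S : KSub n k) :
    pbar S₀ σ₀ π * tbar S₀ σ₀ S = tbar S₀ σ₀ (π • S) * pbar S₀ σ₀ π := by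
  show (QuotientGroup.mk (inr π) : TargetGroup n k S₀ σ₀) * QuotientGroup.mk (inl (tFP S))
      = QuotientGroup.mk (inl (tFP (π • S))) * QuotientGroup.mk (inr π)
  have h : (inr π : Progenitor n k) * inl (tFP S) = inl (tFP (π • S)) * inr π := by
    rw [← fpAut_tFP, inl_aut]
    simp [mul_assoc, ← map_mul]
  rw [← QuotientGroup.mk_mul, ← QuotientGroup.mk_mul, h]

lemma rel_cube : (tbar S₀ σ₀ S₀ * pbar S₀ σ₀ σ₀) ^ 3 = 1 := by
  have hmem : ((inl (tFP S₀) * inr σ₀ : Progenitor n k)) ^ 3 ∈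
      Subgroup.normalClosure {(inl (tFP S₀) * inr σ₀ : Progenitor n k) ^ 3} :=
    Subgroup.subset_normalClosure (Set.mem_singleton _)
  have h1 : (QuotientGroup.mk' _ ((inl (tFP S₀) * inr σ₀ : Progenitor n k) ^ 3)
      : TargetGroup n k S₀ σ₀) = 1 := (QuotientGroup.eq_one_iff _).mpr hmem
  rw [map_pow, map_mul] at h1
  exact h1

end Structural

section Relations

variable {n : ℕ} (e0 e1 : Fin n)

/-- abbreviation for the target group of type A -/
abbrev GA (e0 e1 : Fin n) := TargetGroup n 1 (sing e0) (Equiv.swap e0 e1)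

/-- symmetric generators -/
def tt (a : Fin n) : GA e0 e1 := tbar (sing e0) (Equiv.swap e0 e1) (sing a)

/-- image of the control group -/
def pp : Equiv.Perm (Fin n) →* GA e0 e1 := pbar (sing e0) (Equiv.swap e0 e1)

lemma tt_mul_self (a : Fin n) : tt e0 e1 a * tt e0 e1 a = 1 := tbar_mul_self _ _ _

lemma pp_mul_tt (π : Equiv.Perm (Fin n)) (a : Fin n) :
    pp e0 e1 π * tt e0 e1 a = tt e0 e1 (π a) * pp e0 e1 π := by
  have h := pbar_mul_tbar (sing e0) (Equiv.swap e0 e1) π (sing a)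
  rwa [smul_sing] at h

lemma pp_conj_tt (π : Equiv.Perm (Fin n)) (a : Fin n) :
    pp e0 e1 π * tt e0 e1 a * (pp e0 e1 π)⁻¹ = tt e0 e1 (π a) := by
  rw [pp_mul_tt, mul_inv_cancel_right]

lemma pbar_mul_tbar' (τ : Equiv.Perm (Fin n)) (S : KSub n 1) :
    tbar (sing e0) (Equiv.swap e0 e1) S * pp e0 e1 τ
      = pp e0 e1 τ * tbar (sing e0) (Equiv.swap e0 e1) (τ⁻¹ • S) := by
  have h := pbar_mul_tbar (sing e0) (Equiv.swap e0 e1) τ (τ⁻¹ • S)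
  rw [smul_inv_smul] at h
  exact h.symm

lemma rel_base (hne : e0 ≠ e1) :
    tt e0 e1 e0 * tt e0 e1 e1 = pp e0 e1 (Equiv.swap e0 e1) * tt e0 e1 e0 := by
  have h3 : (tt e0 e1 e0 * pp e0 e1 (Equiv.swap e0 e1)) ^ 3 = 1 :=
    rel_cube (sing e0) (Equiv.swap e0 e1)
  set t0 := tt e0 e1 e0 with ht0def
  set t1 := tt e0 e1 e1 with ht1def
  set p := pp e0 e1 (Equiv.swap e0 e1) with hpdef
  have hp2 : p * p = 1 := by
    rw [hpdef, ← map_mul, Equiv.swap_mul_self, map_one]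
  have hpt0 : p * t0 = t1 * p := by
    have h := pp_mul_tt e0 e1 (Equiv.swap e0 e1) e0
    rwa [Equiv.swap_apply_left] at h
  have hpt1 : p * t1 = t0 * p := by
    have h := pp_mul_tt e0 e1 (Equiv.swap e0 e1) e1
    rwa [Equiv.swap_apply_right] at h
  have ht02 : t0 * t0 = 1 := tt_mul_self e0 e1 e0
  clear_value t0 t1 p
  have key : t0 * t1 * (t0 * p) = 1 := by
    have h3l := h3
    rw [pow_three] at h3l
    have h3' : t0 * (p * t0) * (p * t0) * p = 1 := by rw [← h3l]; group
    rw [hpt0] at h3'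
    have h3'' : t0 * t1 * (p * t1) * (p * p) = 1 := by rw [← h3']; group
    rw [hpt1, hp2, mul_one] at h3''
    exact h3''
  have hpinv : p⁻¹ = p := inv_eq_of_mul_eq_one_right hp2
  have htinv : t0⁻¹ = t0 := inv_eq_of_mul_eq_one_right ht02
  calc t0 * t1 = t0 * t1 * (t0 * p) * (p⁻¹ * t0⁻¹) := by group
    _ = p⁻¹ * t0⁻¹ := by rw [key, one_mul]
    _ = p * t0 := by rw [hpinv, htinv]

lemma exists_perm_pair (hne : e0 ≠ e1) {a b : Fin n} (hab : a ≠ b) :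
    ∃ π : Equiv.Perm (Fin n), π e0 = a ∧ π e1 = b := by
  have hkey : e0 ≠ Equiv.swap e0 a b := by
    intro h
    apply hab
    have h2 : Equiv.swap e0 a e0 = Equiv.swap e0 a (Equiv.swap e0 a b) := congrArg _ h
    rwa [Equiv.swap_apply_left, Equiv.swap_apply_self] at h2
  refine ⟨Equiv.swap e0 a * Equiv.swap e1 (Equiv.swap e0 a b), ?_, ?_⟩
  · rw [Equiv.Perm.mul_apply, Equiv.swap_apply_of_ne_of_ne hne hkey, Equiv.swap_apply_left]
  · rw [Equiv.Perm.mul_apply, Equiv.swap_apply_left, Equiv.swap_apply_self]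

lemma rel_gen (hne : e0 ≠ e1) {a b : Fin n} (hab : a ≠ b) :
    tt e0 e1 a * tt e0 e1 b = pp e0 e1 (Equiv.swap a b) * tt e0 e1 a := by
  obtain ⟨π, hπ0, hπ1⟩ := exists_perm_pair e0 e1 hne hab
  calc tt e0 e1 a * tt e0 e1 b
      = (pp e0 e1 π * tt e0 e1 e0 * (pp e0 e1 π)⁻¹) *
        (pp e0 e1 π * tt e0 e1 e1 * (pp e0 e1 π)⁻¹) := by
        rw [pp_conj_tt, pp_conj_tt, hπ0, hπ1]
    _ = pp e0 e1 π * (tt e0 e1 e0 * tt e0 e1 e1) * (pp e0 e1 π)⁻¹ := by group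
    _ = pp e0 e1 π * (pp e0 e1 (Equiv.swap e0 e1) * tt e0 e1 e0) * (pp e0 e1 π)⁻¹ := by
        rw [rel_base e0 e1 hne]
    _ = (pp e0 e1 (π * Equiv.swap e0 e1 * π⁻¹)) *
        (pp e0 e1 π * tt e0 e1 e0 * (pp e0 e1 π)⁻¹) := by
        rw [map_mul, map_mul, map_inv]; group
    _ = pp e0 e1 (π * Equiv.swap e0 e1 * π⁻¹) * tt e0 e1 a := by rw [pp_conj_tt, hπ0]
    _ = pp e0 e1 (Equiv.swap a b) * tt e0 e1 a := by
        rw [← hπ0, ← hπ1, Equiv.swap_apply_apply]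

end Relations

section Counting

variable {n : ℕ} (e0 e1 : Fin n)

/-- optional symmetric generator -/
def ttOpt (o : Option (KSub n 1)) : GA e0 e1 :=
  o.elim 1 (tbar (sing e0) (Equiv.swap e0 e1))

/-- the enumeration map -/
def enum (x : Equiv.Perm (Fin n) × Option (KSub n 1)) : GA e0 e1 :=
  pp e0 e1 x.1 * ttOpt e0 e1 x.2

lemma ttOpt_mul_pp (τ : Equiv.Perm (Fin n)) (o : Option (KSub n 1)) :
    ttOpt e0 e1 o * pp e0 e1 τ = pp e0 e1 τ * ttOpt e0 e1 (o.map (fun S => τ⁻¹ • S)) := by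
  cases o with
  | none => simp [ttOpt]
  | some S => exact pbar_mul_tbar' e0 e1 τ S

lemma ttOpt_mul_ttOpt (hne : e0 ≠ e1) (o o' : Option (KSub n 1)) :
    ∃ x, ttOpt e0 e1 o * ttOpt e0 e1 o' = enum e0 e1 x := by
  cases o with
  | none =>
    exact ⟨(1, o'), by simp [enum, ttOpt]⟩
  | some S =>
    cases o' with
    | none => exact ⟨(1, some S), by simp [enum, ttOpt]⟩
    | some S' =>
      rcases eq_or_ne S S' with rfl | hSS
      · exact ⟨(1, none), by simpa [enum, ttOpt] using tbar_mul_self (sing e0) (Equiv.swap e0 e1) S⟩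
      · obtain ⟨a, rfl⟩ := ksub_eq_sing S
        obtain ⟨b, rfl⟩ := ksub_eq_sing S'
        have hab : a ≠ b := fun h => hSS (by rw [h])
        refine ⟨(Equiv.swap a b, some (sing a)), ?_⟩
        have h := rel_gen e0 e1 hne hab
        simpa [enum, ttOpt, tt] using h

lemma enum_mul (hne : e0 ≠ e1) (x y : Equiv.Perm (Fin n) × Option (KSub n 1)) :
    ∃ z, enum e0 e1 x * enum e0 e1 y = enum e0 e1 z := by
  obtain ⟨σ, o⟩ := x
  obtain ⟨τ, o'⟩ := y
  obtain ⟨⟨ρ, o''⟩, hz⟩ := ttOpt_mul_ttOpt e0 e1 hne (o.map (fun S => τ⁻¹ • S)) o'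
  refine ⟨(σ * τ * ρ, o''), ?_⟩
  calc enum e0 e1 (σ, o) * enum e0 e1 (τ, o')
      = pp e0 e1 σ * (ttOpt e0 e1 o * pp e0 e1 τ) * ttOpt e0 e1 o' := by
        simp only [enum]; group
    _ = pp e0 e1 σ * (pp e0 e1 τ * ttOpt e0 e1 (o.map (fun S => τ⁻¹ • S))) * ttOpt e0 e1 o' := by
        rw [ttOpt_mul_pp]
    _ = pp e0 e1 σ * pp e0 e1 τ *
        (ttOpt e0 e1 (o.map (fun S => τ⁻¹ • S)) * ttOpt e0 e1 o') := by group
    _ = pp e0 e1 σ * pp e0 e1 τ * (pp e0 e1 ρ * ttOpt e0 e1 o'') := by rw [hz]; rfl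
    _ = enum e0 e1 (σ * τ * ρ, o'') := by simp only [enum, map_mul]; group

lemma enum_surjective (hne : e0 ≠ e1) : Function.Surjective (enum e0 e1) := by
  intro g
  induction g using QuotientGroup.induction_on with
  | H x =>
    rw [← SemidirectProduct.inl_left_mul_inr_right x]
    rw [QuotientGroup.mk_mul]
    have hright : ∃ z, (QuotientGroup.mk (SemidirectProduct.inr x.right) : GA e0 e1)
        = enum e0 e1 z := ⟨(x.right, none), by simp [enum, ttOpt]; rfl⟩
    have hleft : ∃ z, (QuotientGroup.mk (SemidirectProduct.inl x.left) : GA e0 e1)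
        = enum e0 e1 z := by
      induction x.left using Monoid.CoprodI.induction_on with
      | one =>
        refine ⟨(1, none), ?_⟩
        simp [enum, ttOpt]
      | of i m =>
        rcases zmod2_cases m with rfl | rfl
        · refine ⟨(1, none), ?_⟩
          rw [MonoidHom.map_one (Monoid.CoprodI.of (i := i))]
          simp [enum, ttOpt]
        · refine ⟨(1, some i), ?_⟩
          show (QuotientGroup.mk (SemidirectProduct.inl (tFP i)) : GA e0 e1) = _
          simp [enum, ttOpt]
          rfl
      | mul a b ha hb =>
        obtain ⟨za, hza⟩ := ha
        obtain ⟨zb, hzb⟩ := hb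
        obtain ⟨z, hz⟩ := enum_mul e0 e1 hne za zb
        refine ⟨z, ?_⟩
        rw [map_mul, QuotientGroup.mk_mul, hza, hzb, hz]
    obtain ⟨za, hza⟩ := hleft
    obtain ⟨zb, hzb⟩ := hright
    obtain ⟨z, hz⟩ := enum_mul e0 e1 hne za zb
    exact ⟨z, by rw [hza, hzb, hz]⟩

end Counting

section Phi

variable (n : ℕ)

/-- embedding of `Fin n` into `Fin (n+1)` -/
def iotaEmb : Fin n ↪ Fin (n + 1) := ⟨Fin.castSucc, Fin.castSucc_injective n⟩

lemma last_not_mem_range : Fin.last n ∉ Set.range (iotaEmb n) := by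
  rintro ⟨c, hc⟩
  exact absurd hc (Fin.castSucc_lt_last c).ne

/-- embedding of the control group -/
noncomputable def J : Equiv.Perm (Fin n) →* Equiv.Perm (Fin (n + 1)) :=
  Equiv.Perm.viaEmbeddingHom (iotaEmb n)

lemma J_apply_iota (σ : Equiv.Perm (Fin n)) (a : Fin n) :
    J n σ (iotaEmb n a) = iotaEmb n (σ a) := by
  rw [J, Equiv.Perm.viaEmbeddingHom_apply, Equiv.Perm.viaEmbedding_apply]

lemma J_apply_last (σ : Equiv.Perm (Fin n)) : J n σ (Fin.last n) = Fin.last n := by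
  rw [J, Equiv.Perm.viaEmbeddingHom_apply,
    Equiv.Perm.viaEmbedding_apply_of_notMem _ _ _ (last_not_mem_range n)]

lemma J_swap (a b : Fin n) :
    J n (Equiv.swap a b) = Equiv.swap (iotaEmb n a) (iotaEmb n b) := by
  rw [J, Equiv.Perm.viaEmbeddingHom_apply, viaEmbedding_swap]

/-- image of a symmetric generator -/
def tau (S : KSub n 1) : Equiv.Perm (Fin (n + 1)) :=
  Equiv.swap (iotaEmb n (el S)) (Fin.last n)

/-- map on the free product -/
noncomputable def fone : FP n 1 →* Equiv.Perm (Fin (n + 1)) :=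
  Monoid.CoprodI.lift (fun S => invHom (tau n S) (Equiv.swap_mul_self _ _))

lemma fone_tFP (S : KSub n 1) : fone n (tFP S) = tau n S := by
  rw [tFP, fone, Monoid.CoprodI.lift_of]; exact invHom_apply_one _ _

lemma phi_compat (σ : Equiv.Perm (Fin n)) :
    (fone n).comp ((fpAut n 1 σ)).toMonoidHom
      = (MulAut.conj (J n σ)).toMonoidHom.comp (fone n) := by
  apply Monoid.CoprodI.ext_hom
  intro S
  apply zmod2_hom_ext
  show fone n (fpAut n 1 σ (Monoid.CoprodI.of (Multiplicative.ofAdd (1 : ZMod 2))))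
    = MulAut.conj (J n σ) (fone n (Monoid.CoprodI.of (Multiplicative.ofAdd (1 : ZMod 2))))
  show fone n (fpAut n 1 σ (tFP S)) = MulAut.conj (J n σ) (fone n (tFP S))
  rw [fpAut_tFP, fone_tFP, fone_tFP, MulAut.conj_apply, tau, tau, el_smul]
  conv_lhs => rw [← J_apply_iota n σ (el S), ← J_apply_last n σ, Equiv.swap_apply_apply]

/-- the homomorphism on the progenitor -/
noncomputable def Phi : Progenitor n 1 →* Equiv.Perm (Fin (n + 1)) :=
  SemidirectProduct.lift (fone n) (J n) (phi_compat n)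

variable (e0 e1 : Fin n)

lemma Phi_relator (hne : e0 ≠ e1) :
    Phi n ((SemidirectProduct.inl (tFP (sing e0)) * SemidirectProduct.inr (Equiv.swap e0 e1)) ^ 3)
      = 1 := by
  rw [map_pow, map_mul]
  have h1 : Phi n (SemidirectProduct.inl (tFP (sing e0))) = tau n (sing e0) := by
    rw [Phi, SemidirectProduct.lift_inl, fone_tFP]
  have h2 : Phi n (SemidirectProduct.inr (Equiv.swap e0 e1))
      = Equiv.swap (iotaEmb n e0) (iotaEmb n e1) := by
    rw [Phi, SemidirectProduct.lift_inr, J_swap]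
  rw [h1, h2, tau, el_sing]
  exact swap_swap_cube (fun h => hne ((iotaEmb n).injective h))
    (Fin.castSucc_lt_last e0).ne (Fin.castSucc_lt_last e1).ne

/-- the induced homomorphism on the target group -/
noncomputable def PhiBar (hne : e0 ≠ e1) : GA e0 e1 →* Equiv.Perm (Fin (n + 1)) :=
  QuotientGroup.lift _ (Phi n)
    (fun x hx => Subgroup.normalClosure_le_normal (N := (Phi n).ker)
      (by rintro y rfl; exact Phi_relator n e0 e1 hne) hx)

lemma PhiBar_mk (hne : e0 ≠ e1) (x : Progenitor n 1) :
    PhiBar n e0 e1 hne (QuotientGroup.mk x) = Phi n x := rfl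

lemma PhiBar_surjective (hne : e0 ≠ e1) : Function.Surjective (PhiBar n e0 e1 hne) := by
  have hswap : ∀ x y : Fin (n + 1), Equiv.swap x y ∈ (PhiBar n e0 e1 hne).range := by
    intro x y
    induction x using Fin.lastCases with
    | last =>
      induction y using Fin.lastCases with
      | last => rw [Equiv.swap_self]; exact ⟨1, map_one _⟩
      | cast v =>
        refine ⟨QuotientGroup.mk (SemidirectProduct.inl (tFP (sing v))), ?_⟩
        rw [PhiBar_mk, Phi, SemidirectProduct.lift_inl, fone_tFP, tau, el_sing,
          Equiv.swap_comm]
        rfl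
    | cast u =>
      induction y using Fin.lastCases with
      | last =>
        refine ⟨QuotientGroup.mk (SemidirectProduct.inl (tFP (sing u))), ?_⟩
        rw [PhiBar_mk, Phi, SemidirectProduct.lift_inl, fone_tFP, tau, el_sing]
        rfl
      | cast v =>
        refine ⟨QuotientGroup.mk (SemidirectProduct.inr (Equiv.swap u v)), ?_⟩
        rw [PhiBar_mk, Phi, SemidirectProduct.lift_inr, J_swap]
        rfl
  have hrange : ∀ π : Equiv.Perm (Fin (n + 1)), π ∈ (PhiBar n e0 e1 hne).range := by
    intro π
    refine Equiv.Perm.swap_induction_on π ⟨1, map_one _⟩ ?_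
    intro f x y hxy ih
    exact mul_mem (hswap x y) ih
  intro π
  obtain ⟨g, hg⟩ := hrange π
  exact ⟨g, hg⟩

end Phi

section Final

/-- 1-element subsets biject with elements -/
def elEquiv (n : ℕ) : Fin n ≃ KSub n 1 :=
  ⟨sing, el, el_sing, sing_el⟩

lemma main_iso {n : ℕ} (e0 e1 : Fin n) (hne : e0 ≠ e1) :
    Nonempty (GA e0 e1 ≃* Equiv.Perm (Fin (n + 1))) := by
  have hfin : Finite (GA e0 e1) := Finite.of_surjective _ (enum_surjective e0 e1 hne)
  have hk : Nat.card (KSub n 1) = n := by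
    rw [← Nat.card_congr (elEquiv n), Nat.card_eq_fintype_card, Fintype.card_fin]
  have hcard1 : Nat.card (Equiv.Perm (Fin n) × Option (KSub n 1)) = (n + 1).factorial := by
    rw [Nat.card_prod, Nat.card_eq_fintype_card, Fintype.card_perm, Fintype.card_fin,
      Nat.card_eq_fintype_card (α := Option (KSub n 1)), Fintype.card_option,
      ← Nat.card_eq_fintype_card, hk, Nat.factorial_succ, Nat.mul_comm]
  have hcard2 : Nat.card (GA e0 e1) ≤ (n + 1).factorial :=
    hcard1 ▸ Nat.card_le_card_of_surjective _ (enum_surjective e0 e1 hne)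
  have hcard3 : Nat.card (Equiv.Perm (Fin (n + 1))) = (n + 1).factorial := by
    rw [Nat.card_eq_fintype_card, Fintype.card_perm, Fintype.card_fin]
  have hbij : Function.Bijective (PhiBar n e0 e1 hne) :=
    (PhiBar_surjective n e0 e1 hne).bijective_of_nat_card_le (by rw [hcard3]; exact hcard2)
  exact ⟨MulEquiv.ofBijective _ hbij⟩

end Final

/-- For every `n ≥ 2`, the target group obtained by factoring the progenitor
`2^{⋆n} : Sₙ` (with `Sₙ` acting on the 1-element subsets of `{1,…,n}`) by the single relator
`(t₁·(1 2))³` is isomorphic to the symmetric group on `n + 1` letters, i.e. the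
Coxeter group of type `Aₙ`. -/
theorem targetGroup_A_iso_symmetricGroup (n : ℕ) (hn : 2 ≤ n) :
    Nonempty
      (TargetGroup n 1 ⟨{⟨0, by omega⟩}, Finset.card_singleton _⟩
          (Equiv.swap ⟨0, by omega⟩ ⟨1, by omega⟩) ≃*
        Equiv.Perm (Fin (n + 1))) := by
  have hne : (⟨0, by omega⟩ : Fin n) ≠ ⟨1, by omega⟩ := by
    intro h
    exact absurd (congrArg Fin.val h) (by norm_num)
  exact main_iso ⟨0, by omega⟩ ⟨1, by omega⟩ hne
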